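/- Let G be a topological group such that for every left uniformly discrete subset A ⊆ G and every neighbourhood V of the identity there is a neighbourhood U of the identity with UA ⊆ AV. Then the same conclusion holds for every subset A ⊆ G: for every A ⊆ G and every neighbourhood V of the identity there is a neighbourhood U of the identity with UA ⊆ AV. -/

import Mathlib

open scoped Pointwise

theorem neutral_from_uniformly_discrete
    {G : Type*} [Group G] [TopologicalSpace G] [IsTopologicalGroup G]
    (h : ∀ A : Set G,
      (∃ W ∈ nhds (1 : G), ∀ a ∈ A, ∀ b ∈ A, a ≠ b →
        Disjoint (({a} : Set G) * W) (({b} : Set G) * W)) →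
      ∀ V ∈ nhds (1 : G), ∃ U ∈ nhds (1 : G), U * A ⊆ A * V) :
    ∀ A : Set G, ∀ V ∈ nhds (1 : G), ∃ U ∈ nhds (1 : G), U * A ⊆ A * V := by
  intro A V hV
  -- W₁ * W₁ ⊆ V
  obtain ⟨W₁, hW₁o, hW₁1, hW₁⟩ := exists_open_nhds_one_mul_subset hV
  have hW₁n : W₁ ∈ nhds (1 : G) := hW₁o.mem_nhds hW₁1
  -- W₂ * W₂ ⊆ W₁
  obtain ⟨W₂, hW₂o, hW₂1, hW₂⟩ := exists_open_nhds_one_mul_subset hW₁n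
  set W' : Set G := W₂ ∩ W₂⁻¹ with hW'def
  have hW'n : W' ∈ nhds (1 : G) :=
    Filter.inter_mem (hW₂o.mem_nhds hW₂1) (by simpa using inv_mem_nhds_one G (hW₂o.mem_nhds hW₂1))
  have hW'sub : W' ⊆ W₂ := Set.inter_subset_left
  have hW'inv : W'⁻¹ ⊆ W₂ := by
    intro x hx
    simp only [hW'def, Set.mem_inv, Set.mem_inter_iff] at hx
    simpa using hx.2
  -- Zorn: maximal W'-separated subset of A
  set S : Set (Set G) := {B | B ⊆ A ∧ ∀ a ∈ B, ∀ b ∈ B, a ≠ b →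
      Disjoint (({a} : Set G) * W') (({b} : Set G) * W')} with hSdef
  obtain ⟨B, hBmax⟩ := zorn_subset S (by
    intro c hc hchain
    refine ⟨⋃₀ c, ⟨?_, ?_⟩, fun s hs => Set.subset_sUnion_of_mem hs⟩
    · exact Set.sUnion_subset fun s hs => (hc hs).1
    · rintro a ⟨s, hs, has⟩ b ⟨t, ht, hbt⟩ hab
      rcases hchain.total hs ht with hst | hts
      · exact (hc ht).2 a (hst has) b hbt hab
      · exact (hc hs).2 a has b (hts hbt) hab)
  obtain ⟨⟨hBA, hBsep⟩, hBm⟩ := hBmax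
  -- A ⊆ B * W₁
  have hABW : A ⊆ B * W₁ := by
    intro a ha
    by_cases haB : a ∈ B
    · exact ⟨a, haB, 1, hW₁1, mul_one a⟩
    by_cases hd : ∀ b ∈ B, Disjoint (({a} : Set G) * W') (({b} : Set G) * W')
    · exfalso
      apply haB
      have : insert a B ∈ S := by
        refine ⟨Set.insert_subset ha hBA, ?_⟩
        rintro x (rfl | hx) y (rfl | hy) hxy
        · exact absurd rfl hxy
        · exact hd y hy
        · exact (hd x hx).symm
        · exact hBsep x hx y hy hxy
      have := hBm this (Set.subset_insert a B)
      exact this (Set.mem_insert a B)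
    · push_neg at hd
      obtain ⟨b, hb, hnd⟩ := hd
      rw [Set.not_disjoint_iff] at hnd
      obtain ⟨x, hx1, hx2⟩ := hnd
      rw [Set.singleton_mul] at hx1 hx2
      obtain ⟨w₁, hw₁, rfl⟩ := hx1
      obtain ⟨w₂, hw₂, he⟩ := hx2
      -- a * w₁ = b * w₂, so a = b * (w₂ * w₁⁻¹) ∈ b * W₂ * W₂ ⊆ b * W₁
      refine ⟨b, hb, w₂ * w₁⁻¹, hW₂ ⟨w₂, hW'sub hw₂, w₁⁻¹, hW'inv (by simpa using hw₁), rfl⟩, ?_⟩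
      have : a = b * (w₂ * w₁⁻¹) := by
        simp only at he; rw [← mul_assoc, he]; group
      rw [this]
  -- apply hypothesis to B
  obtain ⟨U, hU, hUB⟩ := h B ⟨W', hW'n, hBsep⟩ W₁ hW₁n
  refine ⟨U, hU, ?_⟩
  calc U * A ⊆ U * (B * W₁) := Set.mul_subset_mul_left hABW
    _ = (U * B) * W₁ := (mul_assoc _ _ _).symm
    _ ⊆ (B * W₁) * W₁ := Set.mul_subset_mul_right hUB
    _ = B * (W₁ * W₁) := mul_assoc _ _ _
    _ ⊆ A * V := Set.mul_subset_mul hBA hW₁
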